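/- Let u ∈ L¹(ℝ) be nonnegative, and for t > 0 set u(·,t) = u * M_{2t}, the solution of the heat equation w_t = w_xx with initial datum u. Define the rescaled solution U(x,t) = sqrt(1+2t) · u( x·sqrt(1+2t), t ). Then U(·,t) converges to M₁ · ∫_ℝ u(x) dx in L¹(ℝ) as t → ∞, where M₁ is the standard Gaussian density of variance 1. -/

import Mathlib

open MeasureTheory Real Filter

/-- The centered Gaussian density on `ℝ` with variance `s`. -/
noncomputable def gauss (s : ℝ) : ℝ → ℝ :=
  fun x => (2 * Real.pi * s) ^ (-(1:ℝ)/2) * Real.exp (-x ^ 2 / (2 * s))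

lemma gauss_nonneg {s : ℝ} (hs : 0 < s) (x : ℝ) : 0 ≤ gauss s x := by
  unfold gauss; positivity

lemma gauss_continuous (s : ℝ) : Continuous (gauss s) := by
  unfold gauss; fun_prop

lemma gauss_eq (s : ℝ) : gauss s = fun x => (2*Real.pi*s) ^ (-(1:ℝ)/2) * Real.exp (-(1/(2*s)) * x^2) := by
  funext x; unfold gauss; ring_nf

lemma gauss_integrable {s : ℝ} (hs : 0 < s) : Integrable (gauss s) := by
  rw [gauss_eq]
  exact (integrable_exp_neg_mul_sq (by positivity)).const_mul _

lemma gauss_integral {s : ℝ} (hs : 0 < s) : ∫ x, gauss s x = 1 := by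
  rw [gauss_eq]
  rw [MeasureTheory.integral_const_mul, integral_gaussian]
  have h1 : π / (1/(2*s)) = 2*π*s := by field_simp
  rw [h1, Real.sqrt_eq_rpow, ← Real.rpow_add (by positivity)]
  norm_num

lemma gauss_scale {t : ℝ} (ht : 0 < t) (x z : ℝ) :
    Real.sqrt (1+2*t) * gauss (2*t) (x * Real.sqrt (1+2*t) - z)
      = gauss (2*t/(1+2*t)) (x - z / Real.sqrt (1+2*t)) := by
  have h1 : (0:ℝ) < 1 + 2*t := by linarith
  set σ := Real.sqrt (1+2*t) with hσdef
  have hσ0 : 0 < σ := Real.sqrt_pos.mpr h1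
  have hσ2 : σ^2 = 1 + 2*t := Real.sq_sqrt h1.le
  rw [← hσ2]
  unfold gauss
  have h2 : ((σ^2 : ℝ)) ^ (-(1:ℝ)/2) = σ⁻¹ := by
    rw [← Real.rpow_natCast σ 2, ← Real.rpow_mul hσ0.le]
    norm_num
    exact Real.rpow_neg_one σ
  have hpre : (2*π*(2*t/σ^2)) ^ (-(1:ℝ)/2) = σ * (2*π*(2*t)) ^ (-(1:ℝ)/2) := by
    have h3 : 2*π*(2*t/σ^2) = (2*π*(2*t)) / σ^2 := by ring
    rw [h3, Real.div_rpow (by positivity) (by positivity), h2, div_inv_eq_mul]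
    ring
  have hexp : -(x*σ - z)^2/(2*(2*t)) = -(x - z/σ)^2/(2*(2*t/σ^2)) := by
    have h4 : (x*σ - z)^2 = (x - z/σ)^2 * σ^2 := by
      field_simp
    rw [h4]
    field_simp
  rw [hpre, hexp]
  ring

lemma tendsto_svar : Tendsto (fun t : ℝ => 2*t/(1+2*t)) atTop (nhds 1) := by
  have h : ∀ᶠ t : ℝ in atTop, 2/(t⁻¹ + 2) = 2*t/(1+2*t) := by
    filter_upwards [eventually_gt_atTop 0] with t ht
    rw [eq_div_iff (by positivity)]
    field_simp
  refine Tendsto.congr' h ?_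
  have : Tendsto (fun t : ℝ => 2/(t⁻¹ + 2)) atTop (nhds (2/(0 + 2))) :=
    tendsto_const_nhds.div (tendsto_inv_atTop_zero.add_const 2) (by norm_num)
  simpa using this

lemma tendsto_sqrt_atTop' : Tendsto Real.sqrt atTop atTop := by
  apply tendsto_atTop_atTop.mpr
  intro b
  refine ⟨(max b 0)^2, fun a ha => le_trans (le_max_left b 0) ?_⟩
  rw [show max b 0 = Real.sqrt ((max b 0)^2) from (Real.sqrt_sq (le_max_right b 0)).symm]
  exact Real.sqrt_le_sqrt ha

lemma tendsto_sigma_atTop : Tendsto (fun t : ℝ => Real.sqrt (1+2*t)) atTop atTop := by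
  apply tendsto_sqrt_atTop'.comp
  apply tendsto_atTop_add_const_left
  exact (tendsto_const_mul_atTop_of_pos two_pos).mpr tendsto_id

lemma tendsto_shift (z : ℝ) : Tendsto (fun t : ℝ => z / Real.sqrt (1+2*t)) atTop (nhds 0) :=
  Tendsto.div_atTop tendsto_const_nhds tendsto_sigma_atTop

lemma gauss_tendsto (x z : ℝ) :
    Tendsto (fun t => gauss (2*t/(1+2*t)) (x - z / Real.sqrt (1+2*t))) atTop
      (nhds (gauss 1 x)) := by
  unfold gauss
  have h1 : Tendsto (fun t : ℝ => (2*π*(2*t/(1+2*t))) ^ (-(1:ℝ)/2)) atTop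
      (nhds ((2*π*1) ^ (-(1:ℝ)/2))) := by
    have hc : ContinuousAt (fun y : ℝ => y ^ (-(1:ℝ)/2)) (2*π*1) :=
      Real.continuousAt_rpow_const _ _ (Or.inl (by positivity))
    exact hc.tendsto.comp (tendsto_const_nhds.mul tendsto_svar)
  have h2 : Tendsto (fun t : ℝ => Real.exp (-(x - z / Real.sqrt (1+2*t))^2 / (2*(2*t/(1+2*t)))))
      atTop (nhds (Real.exp (-(x - 0)^2/(2*1)))) := by
    apply Real.continuous_exp.continuousAt.tendsto.comp
    apply Tendsto.div
    · exact ((tendsto_const_nhds.sub (tendsto_shift z)).pow 2).neg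
    · exact tendsto_const_nhds.mul tendsto_svar
    · norm_num
  have h3 := h1.mul h2
  norm_num at h3 ⊢
  exact h3

lemma gauss_bound {s a x c : ℝ} (hs1 : 1/2 ≤ s) (hs2 : s ≤ 1) (ha : |a| ≤ c) :
    gauss s (x - a) ≤ Real.exp (c^2) * Real.exp (-(1/4:ℝ) * x^2) := by
  have hs0 : (0:ℝ) < s := by linarith
  unfold gauss
  have h1 : (2*π*s) ^ (-(1:ℝ)/2) ≤ 1 :=
    Real.rpow_le_one_of_one_le_of_nonpos (by nlinarith [Real.pi_gt_three]) (by norm_num)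
  have hxa : x*a ≤ |x| * c := by
    calc x*a ≤ |x*a| := le_abs_self _
    _ = |x| * |a| := abs_mul _ _
    _ ≤ |x| * c := by gcongr
  have h2 : Real.exp (-(x-a)^2 / (2*s)) ≤ Real.exp (c^2 + -(1/4:ℝ)*x^2) := by
    apply Real.exp_le_exp.mpr
    have hd : -(x-a)^2/(2*s) ≤ -(x-a)^2/2 := by
      rw [neg_div, neg_div, neg_le_neg_iff]
      exact div_le_div_of_nonneg_left (sq_nonneg _) (by linarith) (by linarith)
    refine hd.trans ?_
    have hc : 0 ≤ c := le_trans (abs_nonneg a) ha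
    nlinarith [sq_nonneg (|x| - 2*c), sq_abs x]
  calc (2*π*s) ^ (-(1:ℝ)/2) * Real.exp (-(x-a)^2/(2*s))
      ≤ 1 * Real.exp (c^2 + -(1/4:ℝ)*x^2) :=
        mul_le_mul h1 h2 (le_of_lt (Real.exp_pos _)) one_pos.le
    _ = Real.exp (c^2) * Real.exp (-(1/4:ℝ)*x^2) := by rw [one_mul, Real.exp_add]

lemma gauss_upper {s : ℝ} (hs : 0 < s) (y : ℝ) : gauss s y ≤ (2*π*s) ^ (-(1:ℝ)/2) := by
  unfold gauss
  nth_rewrite 2 [← mul_one ((2*π*s) ^ (-(1:ℝ)/2))]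
  apply mul_le_mul_of_nonneg_left _ (by positivity)
  rw [Real.exp_le_one_iff]
  exact div_nonpos_of_nonpos_of_nonneg (neg_nonpos_of_nonneg (sq_nonneg y)) (by positivity)

lemma gauss_comp_integrable {s : ℝ} (hs : 0 < s) (c : ℝ) :
    Integrable (fun x => gauss s (x - c)) := (gauss_integrable hs).comp_sub_right c

lemma phi_le_two {s : ℝ} (hs : 0 < s) (hs1 : s ≤ 1) (c : ℝ) :
    ∫ x, |gauss s (x - c) - gauss 1 x| ≤ 2 := by
  have hint : Integrable (fun x => gauss s (x - c) - gauss 1 x) :=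
    (gauss_comp_integrable hs c).sub (gauss_integrable one_pos)
  calc ∫ x, |gauss s (x - c) - gauss 1 x|
      ≤ ∫ x, (gauss s (x - c) + gauss 1 x) := by
        apply integral_mono hint.abs ((gauss_comp_integrable hs c).add (gauss_integrable one_pos))
        intro x
        calc |gauss s (x - c) - gauss 1 x| ≤ |gauss s (x - c)| + |gauss 1 x| := abs_sub _ _
        _ = gauss s (x - c) + gauss 1 x := by
            rw [abs_of_nonneg (gauss_nonneg hs _), abs_of_nonneg (gauss_nonneg one_pos _)]
    _ = 2 := by
        rw [integral_add (gauss_comp_integrable hs c) (gauss_integrable one_pos),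
          integral_sub_right_eq_self (gauss s) c, gauss_integral hs, gauss_integral one_pos]
        norm_num

lemma svar_pos {t : ℝ} (ht : 0 < t) : 0 < 2*t/(1+2*t) := by positivity
lemma svar_le_one (t : ℝ) (ht : 0 ≤ t) : 2*t/(1+2*t) ≤ 1 := by
  rw [div_le_one (by linarith)]; linarith
lemma svar_ge_half {t : ℝ} (ht : 1/2 ≤ t) : 1/2 ≤ 2*t/(1+2*t) := by
  rw [le_div_iff₀ (by linarith)]; linarith
lemma shift_le {t : ℝ} (ht : 0 ≤ t) (z : ℝ) : |z / Real.sqrt (1+2*t)| ≤ |z| := by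
  rw [abs_div]
  have h1 : (1:ℝ) ≤ Real.sqrt (1+2*t) := by
    nlinarith [Real.sq_sqrt (show (0:ℝ) ≤ 1+2*t by linarith), Real.sqrt_nonneg (1+2*t)]
  rw [abs_of_nonneg (Real.sqrt_nonneg _)]
  exact div_le_self (abs_nonneg z) h1

lemma phi_tendsto (z : ℝ) :
    Tendsto (fun t => ∫ x,
      |gauss (2*t/(1+2*t)) (x - z / Real.sqrt (1+2*t)) - gauss 1 x|) atTop (nhds 0) := by
  have h := tendsto_integral_filter_of_dominated_convergence
    (μ := (volume : Measure ℝ)) (l := atTop) (f := fun _ => (0:ℝ))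
    (F := fun t x => |gauss (2*t/(1+2*t)) (x - z / Real.sqrt (1+2*t)) - gauss 1 x|)
    (bound := fun x => Real.exp (z^2) * Real.exp (-(1/4:ℝ) * x^2) + gauss 1 x)
    ?_ ?_ ?_ ?_
  · simpa using h
  · filter_upwards with t
    exact ((((gauss_continuous _).comp (continuous_id.sub continuous_const)).sub
      (gauss_continuous 1)).abs).aestronglyMeasurable
  · filter_upwards [eventually_ge_atTop (1/2 : ℝ)] with t ht
    filter_upwards with x
    rw [Real.norm_eq_abs, abs_abs]
    calc |gauss (2*t/(1+2*t)) (x - z / Real.sqrt (1+2*t)) - gauss 1 x|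
        ≤ |gauss (2*t/(1+2*t)) (x - z / Real.sqrt (1+2*t))| + |gauss 1 x| := abs_sub _ _
      _ ≤ Real.exp (z^2) * Real.exp (-(1/4:ℝ) * x^2) + gauss 1 x := by
          gcongr
          · rw [abs_of_nonneg (gauss_nonneg (svar_pos (by linarith)) _)]
            have := gauss_bound (x := x) (svar_ge_half ht) (svar_le_one t (by linarith))
              (shift_le (by linarith : (0:ℝ) ≤ t) z)
            simpa [sq_abs] using this
          · rw [abs_of_nonneg (gauss_nonneg one_pos _)]
  · exact ((integrable_exp_neg_mul_sq (by norm_num : (0:ℝ) < 1/4)).const_mul _).add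
      (gauss_integrable one_pos)
  · filter_upwards with x
    have := ((gauss_tendsto x z).sub_const (gauss 1 x)).abs
    simpa using this


/-- `heatSol w t = w * M_{2t}`, the solution at time `t` of the heat equation
`w_t = w_xx` with initial datum `w`. -/
noncomputable def heatSol (w : ℝ → ℝ) (t : ℝ) : ℝ → ℝ :=
  fun x => ∫ y, w (x - y) * gauss (2 * t) y

noncomputable def phi (t z : ℝ) : ℝ :=
  ∫ x, |gauss (2*t/(1+2*t)) (x - z / Real.sqrt (1+2*t)) - gauss 1 x|

lemma phi_nonneg (t z : ℝ) : 0 ≤ phi t z := integral_nonneg fun x => abs_nonneg _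

lemma phi_le_two' {t : ℝ} (ht : 0 < t) (z : ℝ) : phi t z ≤ 2 :=
  phi_le_two (svar_pos ht) (svar_le_one t ht.le) _

lemma phi_meas (t : ℝ) : StronglyMeasurable (fun z => phi t z) := by
  unfold phi
  apply StronglyMeasurable.integral_prod_right (f := fun z x =>
    |gauss (2*t/(1+2*t)) (x - z / Real.sqrt (1+2*t)) - gauss 1 x|)
  apply Continuous.stronglyMeasurable
  exact (((gauss_continuous _).comp
    (continuous_snd.sub (continuous_fst.div_const _))).sub
    ((gauss_continuous 1).comp continuous_snd)).abs

/-- The rescaled heat flow `U(x,t) = √(1+2t) u(x√(1+2t), t)` of a nonnegative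
`u ∈ L¹(ℝ)` converges in `L¹(ℝ)`, as `t → ∞`, to `M₁ ∫ u`, where `M₁` is the
standard Gaussian density of variance `1`. -/
theorem rescaled_heat_flow_tendsto_gaussian (u : ℝ → ℝ)
    (hu : Integrable u) (hu0 : ∀ x, 0 ≤ u x) :
    Tendsto (fun t => ∫ x,
        |Real.sqrt (1 + 2*t) * heatSol u t (x * Real.sqrt (1 + 2*t)) -
          gauss 1 x * ∫ y, u y|) atTop (nhds 0) := by
  have hg : Tendsto (fun t => ∫ z, |u z| * phi t z) atTop (nhds 0) := by
    have h := tendsto_integral_filter_of_dominated_convergence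
      (μ := (volume : Measure ℝ)) (l := atTop) (f := fun _ : ℝ => (0:ℝ))
      (F := fun t z => |u z| * phi t z) (bound := fun z => 2 * |u z|)
      ?_ ?_ ?_ ?_
    · simpa using h
    · filter_upwards with t
      exact (hu.abs).1.mul (phi_meas t).aestronglyMeasurable
    · filter_upwards [eventually_gt_atTop (0:ℝ)] with t ht
      filter_upwards with z
      rw [Real.norm_eq_abs, abs_of_nonneg (mul_nonneg (abs_nonneg _) (phi_nonneg t z)),
        mul_comm (2:ℝ) (|u z|)]
      exact mul_le_mul_of_nonneg_left (phi_le_two' ht z) (abs_nonneg _)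
    · exact hu.abs.const_mul 2
    · filter_upwards with z
      have h2 : Tendsto (fun t => phi t z) atTop (nhds 0) := phi_tendsto z
      simpa using h2.const_mul (|u z|)
  apply squeeze_zero' (Eventually.of_forall fun t => integral_nonneg fun x => abs_nonneg _) ?_ hg
  filter_upwards [eventually_gt_atTop (0:ℝ)] with t ht
  have hs : 0 < 2*t/(1+2*t) := svar_pos ht
  have hs1 : 2*t/(1+2*t) ≤ 1 := svar_le_one t ht.le
  have hK_cont : Continuous fun p : ℝ × ℝ =>
      gauss (2*t/(1+2*t)) (p.1 - p.2 / Real.sqrt (1+2*t)) - gauss 1 p.1 :=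
    ((gauss_continuous _).comp (continuous_fst.sub (continuous_snd.div_const _))).sub
      ((gauss_continuous 1).comp continuous_fst)
  have hFm : AEStronglyMeasurable (fun p : ℝ × ℝ =>
      u p.2 * (gauss (2*t/(1+2*t)) (p.1 - p.2 / Real.sqrt (1+2*t)) - gauss 1 p.1))
      ((volume : Measure ℝ).prod volume) :=
    (hu.1.comp_snd).mul hK_cont.aestronglyMeasurable
  have hx_int : ∀ z : ℝ, Integrable (fun x =>
      u z * (gauss (2*t/(1+2*t)) (x - z / Real.sqrt (1+2*t)) - gauss 1 x)) :=
    fun z => ((gauss_comp_integrable hs _).sub (gauss_integrable one_pos)).const_mul (u z)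
  have hnorm : ∀ z : ℝ, (∫ x,
      ‖u z * (gauss (2*t/(1+2*t)) (x - z / Real.sqrt (1+2*t)) - gauss 1 x)‖)
      = |u z| * phi t z := by
    intro z
    simp only [Real.norm_eq_abs, abs_mul]
    rw [MeasureTheory.integral_const_mul]
    rfl
  have hFi : Integrable (fun p : ℝ × ℝ =>
      u p.2 * (gauss (2*t/(1+2*t)) (p.1 - p.2 / Real.sqrt (1+2*t)) - gauss 1 p.1))
      ((volume : Measure ℝ).prod volume) := by
    refine (integrable_prod_iff' hFm).mpr ⟨Eventually.of_forall fun z => hx_int z, ?_⟩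
    apply Integrable.mono' (hu.abs.const_mul 2) hFm.norm.prod_swap.integral_prod_right'
    filter_upwards with z
    simp only [Prod.swap_prod_mk]
    rw [Real.norm_eq_abs, abs_of_nonneg (integral_nonneg fun x => norm_nonneg _),
      hnorm z, mul_comm (2:ℝ)]
    exact mul_le_mul_of_nonneg_left (phi_le_two' ht z) (abs_nonneg _)
  have key : ∀ x : ℝ,
      Real.sqrt (1+2*t) * heatSol u t (x * Real.sqrt (1+2*t)) - gauss 1 x * ∫ y, u y
        = ∫ z, u z * (gauss (2*t/(1+2*t)) (x - z / Real.sqrt (1+2*t)) - gauss 1 x) := by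
    intro x
    have e1 : heatSol u t (x * Real.sqrt (1+2*t))
        = ∫ z, u z * gauss (2*t) (x * Real.sqrt (1+2*t) - z) := by
      unfold heatSol
      have h3 := MeasureTheory.integral_sub_left_eq_self
        (fun z => u z * gauss (2*t) (x * Real.sqrt (1+2*t) - z)) (volume : Measure ℝ)
        (x * Real.sqrt (1+2*t))
      simp only [sub_sub_cancel] at h3
      rw [← h3]
    have e2 : Real.sqrt (1+2*t) * heatSol u t (x * Real.sqrt (1+2*t))
        = ∫ z, u z * gauss (2*t/(1+2*t)) (x - z / Real.sqrt (1+2*t)) := by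
      rw [e1, ← MeasureTheory.integral_const_mul]
      congr 1
      funext z
      rw [← mul_assoc, mul_comm (Real.sqrt (1+2*t)) (u z), mul_assoc, gauss_scale ht]
    have e3 : gauss 1 x * ∫ y, u y = ∫ z, u z * gauss 1 x := by
      rw [MeasureTheory.integral_mul_const, mul_comm]
    have hA : Integrable (fun z => u z * gauss (2*t/(1+2*t)) (x - z / Real.sqrt (1+2*t))) := by
      have hb : Integrable (fun z =>
          gauss (2*t/(1+2*t)) (x - z / Real.sqrt (1+2*t)) * u z) := by
        apply Integrable.bdd_mul (c := (2*π*(2*t/(1+2*t))) ^ (-(1:ℝ)/2)) hu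
        · exact ((gauss_continuous _).comp
            (continuous_const.sub (continuous_id.div_const _))).aestronglyMeasurable
        · refine Eventually.of_forall fun z => ?_
          rw [Real.norm_eq_abs, abs_of_nonneg (gauss_nonneg hs _)]
          exact gauss_upper hs _
      simpa [mul_comm] using hb
    have hB : Integrable (fun z => u z * gauss 1 x) := hu.mul_const _
    rw [e2, e3, ← integral_sub hA hB]
    congr 1
    funext z
    ring
  calc ∫ x, |Real.sqrt (1+2*t) * heatSol u t (x * Real.sqrt (1+2*t)) - gauss 1 x * ∫ y, u y|
      = ∫ x, |∫ z, u z * (gauss (2*t/(1+2*t)) (x - z / Real.sqrt (1+2*t)) - gauss 1 x)| := by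
        congr 1
        funext x
        rw [key x]
    _ ≤ ∫ x, ∫ z,
        ‖u z * (gauss (2*t/(1+2*t)) (x - z / Real.sqrt (1+2*t)) - gauss 1 x)‖ := by
        apply integral_mono hFi.integral_prod_left.abs hFi.integral_norm_prod_left
        intro x
        simpa [Real.norm_eq_abs] using norm_integral_le_integral_norm
          (fun z => u z * (gauss (2*t/(1+2*t)) (x - z / Real.sqrt (1+2*t)) - gauss 1 x))
    _ = ∫ z, ∫ x,
        ‖u z * (gauss (2*t/(1+2*t)) (x - z / Real.sqrt (1+2*t)) - gauss 1 x)‖ :=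
        integral_integral_swap hFi.norm
    _ = ∫ z, |u z| * phi t z := by
        congr 1
        funext z
        exact hnorm z
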